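/- arXiv:2504.17193 — 3 statements merged into one kernel-verified Lean document; each statement's English description precedes it below -/
import Mathlib

section
/- Let X and Y be real Banach spaces with Y reflexive (the canonical embedding of Y into its double dual Y** is surjective), let F : X → Y be continuous, and let L > 0. Suppose that for every continuous linear functional y* ∈ Y* with ‖y*‖ ≤ 1, the slice φ_{y*} : X → ℝ defined by φ_{y*}(x) = y*(F(x)) is Fréchet differentiable and its derivative φ′_{y*} : X → X* is L-Lipschitz continuous. Then F is Fréchet differentiable on X and its derivative F′ : X → B(X,Y) is L-Lipschitz continuous in the operator norm. -/
/-- If `X`, `Y` are real Banach spaces with `Y` reflexive, `F : X → Y` is continuous, and every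
slice `y* ∘ F` (for `‖y*‖ ≤ 1`) is Fréchet differentiable with `L`-Lipschitz derivative, then
`F` is Fréchet differentiable with `L`-Lipschitz derivative. -/
theorem differentiable_of_slices_differentiable
    {X : Type*} [NormedAddCommGroup X] [NormedSpace ℝ X] [CompleteSpace X]
    {Y : Type*} [NormedAddCommGroup Y] [NormedSpace ℝ Y] [CompleteSpace Y]
    (hrefl : Function.Surjective (NormedSpace.inclusionInDoubleDual ℝ Y))
    (F : X → Y) (hF : Continuous F) (L : ℝ) (hL : 0 < L)
    (hslice : ∀ y' : Y →L[ℝ] ℝ, ‖y'‖ ≤ 1 →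
      Differentiable ℝ (fun z => y' (F z)) ∧
        ∀ a b : X, ‖fderiv ℝ (fun z => y' (F z)) a - fderiv ℝ (fun z => y' (F z)) b‖ ≤
          L * ‖a - b‖) :
    Differentiable ℝ F ∧ ∀ x y : X, ‖fderiv ℝ F x - fderiv ℝ F y‖ ≤ L * ‖x - y‖ := by
  classical
  -- every slice (not just norm ≤ 1) is differentiable
  have hdiff : ∀ y' : Y →L[ℝ] ℝ, Differentiable ℝ (fun z => y' (F z)) := by
    intro y'
    rcases eq_or_ne y' 0 with h0 | h0
    · simp only [h0, ContinuousLinearMap.zero_apply]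
      exact differentiable_const 0
    · have hn : (0:ℝ) < ‖y'‖ := norm_pos_iff.mpr h0
      have h1 : ‖(‖y'‖⁻¹ • y' : Y →L[ℝ] ℝ)‖ ≤ 1 := by
        rw [norm_smul (‖y'‖⁻¹) y', norm_inv, norm_norm, inv_mul_cancel₀ hn.ne']
      have hd := (hslice _ h1).1
      have heq : (fun z => y' (F z)) = fun z => ‖y'‖ • ((‖y'‖⁻¹ • y' : Y →L[ℝ] ℝ) (F z)) := by
        funext z
        simp [ContinuousLinearMap.smul_apply, smul_eq_mul, ← mul_assoc,
          mul_inv_cancel₀ hn.ne']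
      rw [heq]
      exact hd.const_smul ‖y'‖
  -- scaling of slice derivatives
  have hsmul : ∀ (c : ℝ) (y' : Y →L[ℝ] ℝ) (x : X),
      fderiv ℝ (fun z => (c • y') (F z)) x = c • fderiv ℝ (fun z => y' (F z)) x := by
    intro c y' x
    have heq : (fun z => (c • y') (F z)) = fun z => c • y' (F z) := rfl
    rw [heq, fderiv_fun_const_smul (hdiff y' x) c]
  -- additivity of slice derivatives
  have hadd : ∀ (y₁ y₂ : Y →L[ℝ] ℝ) (x : X),
      fderiv ℝ (fun z => (y₁ + y₂) (F z)) x
        = fderiv ℝ (fun z => y₁ (F z)) x + fderiv ℝ (fun z => y₂ (F z)) x := by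
    intro y₁ y₂ x
    have heq : (fun z => (y₁ + y₂) (F z)) = fun z => y₁ (F z) + y₂ (F z) := rfl
    rw [heq, fderiv_fun_add (hdiff y₁ x) (hdiff y₂ x)]
  -- a master homogeneity lemma: estimates on the unit ball scale
  have master : ∀ (G : (Y →L[ℝ] ℝ) → ℝ) (C : ℝ), 0 ≤ C →
      (∀ (c : ℝ) (y' : Y →L[ℝ] ℝ), 0 ≤ c → G (c • y') = c * G y') →
      (∀ y' : Y →L[ℝ] ℝ, ‖y'‖ ≤ 1 → |G y'| ≤ C) →
      ∀ y' : Y →L[ℝ] ℝ, |G y'| ≤ C * ‖y'‖ := by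
    intro G C hC hhom hunit y'
    rcases eq_or_ne y' 0 with h0 | h0
    · have hz : G (0 : Y →L[ℝ] ℝ) = 0 := by
        have := hhom 0 0 le_rfl
        simpa using this
      simp [h0, hz]
    · have hn : (0:ℝ) < ‖y'‖ := norm_pos_iff.mpr h0
      have h1 : ‖(‖y'‖⁻¹ • y' : Y →L[ℝ] ℝ)‖ ≤ 1 := by
        rw [norm_smul (‖y'‖⁻¹) y', norm_inv, norm_norm, inv_mul_cancel₀ hn.ne']
      have heq : y' = ‖y'‖ • (‖y'‖⁻¹ • y' : Y →L[ℝ] ℝ) := by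
        rw [smul_smul, mul_inv_cancel₀ hn.ne', one_smul]
      calc |G y'| = |‖y'‖ * G (‖y'‖⁻¹ • y')| := by
            conv_lhs => rw [heq]
            rw [hhom _ _ (norm_nonneg _)]
        _ = ‖y'‖ * |G (‖y'‖⁻¹ • y')| := by
            rw [abs_mul, abs_of_nonneg (norm_nonneg _)]
        _ ≤ ‖y'‖ * C := mul_le_mul_of_nonneg_left (hunit _ h1) (norm_nonneg _)
        _ = C * ‖y'‖ := mul_comm _ _
  -- mean value estimate for unit slices
  have key : ∀ (y' : Y →L[ℝ] ℝ), ‖y'‖ ≤ 1 → ∀ (x h : X),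
      |y' (F (x + h)) - y' (F x) - fderiv ℝ (fun z => y' (F z)) x h| ≤ L * ‖h‖ * ‖h‖ := by
    intro y' hy' x h
    have hconv : Convex ℝ (Metric.closedBall x ‖h‖) := convex_closedBall _ _
    have hmem1 : x ∈ Metric.closedBall x ‖h‖ := Metric.mem_closedBall_self (norm_nonneg h)
    have hmem2 : x + h ∈ Metric.closedBall x ‖h‖ := by
      simp [Metric.mem_closedBall, dist_eq_norm]
    have hb : ∀ z ∈ Metric.closedBall x ‖h‖,
        ‖fderiv ℝ (fun w => y' (F w)) z - fderiv ℝ (fun w => y' (F w)) x‖ ≤ L * ‖h‖ := by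
      intro z hz
      have h2 : ‖z - x‖ ≤ ‖h‖ := by
        rwa [← dist_eq_norm, ← Metric.mem_closedBall]
      calc ‖fderiv ℝ (fun w => y' (F w)) z - fderiv ℝ (fun w => y' (F w)) x‖
          ≤ L * ‖z - x‖ := (hslice y' hy').2 z x
        _ ≤ L * ‖h‖ := mul_le_mul_of_nonneg_left h2 hL.le
    have hmv := hconv.norm_image_sub_le_of_norm_fderiv_le'
      (fun z _ => ((hslice y' hy').1 z)) hb hmem1 hmem2
    have he : x + h - x = h := add_sub_cancel_left x h
    rw [he] at hmv
    calc |y' (F (x + h)) - y' (F x) - fderiv ℝ (fun z => y' (F z)) x h|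
        = ‖y' (F (x + h)) - y' (F x) - fderiv ℝ (fun z => y' (F z)) x h‖ :=
          (Real.norm_eq_abs _).symm
      _ ≤ L * ‖h‖ * ‖h‖ := hmv
  -- mean value estimate for general slices
  have key' : ∀ (y' : Y →L[ℝ] ℝ) (x h : X),
      |y' (F (x + h)) - y' (F x) - fderiv ℝ (fun z => y' (F z)) x h|
        ≤ L * ‖h‖ * ‖h‖ * ‖y'‖ := by
    intro y' x h
    refine master (fun w => w (F (x + h)) - w (F x) - fderiv ℝ (fun z => w (F z)) x h)
      (L * ‖h‖ * ‖h‖) (by positivity) ?_ (fun w hw => key w hw x h) y'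
    intro c w hc
    beta_reduce
    rw [hsmul]
    simp only [ContinuousLinearMap.smul_apply, smul_eq_mul]
    ring
  -- a bound on the slice derivative at a point, in terms of F
  have bound1 : ∀ (x h : X) (y' : Y →L[ℝ] ℝ),
      |fderiv ℝ (fun z => y' (F z)) x h|
        ≤ (‖F (x + h) - F x‖ + L * ‖h‖ * ‖h‖) * ‖y'‖ := by
    intro x h y'
    refine master (fun w => fderiv ℝ (fun z => w (F z)) x h) _ (by positivity) ?_ ?_ y'
    · intro c w hc
      beta_reduce
      rw [hsmul]
      simp [smul_eq_mul]
    · intro w hw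
      have h1 := key w hw x h
      have e1 : |w (F (x + h)) - w (F x)| ≤ ‖F (x + h) - F x‖ := by
        rw [← map_sub]
        calc |w (F (x + h) - F x)| = ‖w (F (x + h) - F x)‖ := (Real.norm_eq_abs _).symm
          _ ≤ ‖w‖ * ‖F (x + h) - F x‖ := w.le_opNorm _
          _ ≤ 1 * ‖F (x + h) - F x‖ :=
              mul_le_mul_of_nonneg_right hw (norm_nonneg _)
          _ = ‖F (x + h) - F x‖ := one_mul _
      have h2 : |fderiv ℝ (fun z => w (F z)) x h| - |w (F (x + h)) - w (F x)|
          ≤ |fderiv ℝ (fun z => w (F z)) x h - (w (F (x + h)) - w (F x))| :=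
        abs_sub_abs_le_abs_sub _ _
      have h3 : |fderiv ℝ (fun z => w (F z)) x h - (w (F (x + h)) - w (F x))|
          = |w (F (x + h)) - w (F x) - fderiv ℝ (fun z => w (F z)) x h| := abs_sub_comm _ _
      linarith
  -- construct the candidate derivative pointwise via reflexivity
  have hpsi : ∀ (x h : X), ∃ v : Y, ∀ y' : Y →L[ℝ] ℝ,
      y' v = fderiv ℝ (fun z => y' (F z)) x h := by
    intro x h
    let ψlin : (Y →L[ℝ] ℝ) →ₗ[ℝ] ℝ :=
      { toFun := fun y' => fderiv ℝ (fun z => y' (F z)) x h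
        map_add' := fun y₁ y₂ => by
          show fderiv ℝ (fun z => (y₁ + y₂) (F z)) x h
              = fderiv ℝ (fun z => y₁ (F z)) x h + fderiv ℝ (fun z => y₂ (F z)) x h
          rw [hadd, ContinuousLinearMap.add_apply]
        map_smul' := fun c y' => by
          show fderiv ℝ (fun z => (c • y') (F z)) x h
              = (RingHom.id ℝ) c • fderiv ℝ (fun z => y' (F z)) x h
          rw [hsmul, ContinuousLinearMap.smul_apply, RingHom.id_apply] }
    let ψ : (Y →L[ℝ] ℝ) →L[ℝ] ℝ := ψlin.mkContinuousOfExistsBound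
      ⟨‖F (x + h) - F x‖ + L * ‖h‖ * ‖h‖, fun y' => by
        simpa [Real.norm_eq_abs, ψlin] using bound1 x h y'⟩
    obtain ⟨v, hv⟩ := hrefl ψ
    refine ⟨v, fun y' => ?_⟩
    have := ContinuousLinearMap.ext_iff.mp hv y'
    rw [NormedSpace.dual_def] at this
    simpa [ψ, ψlin] using this
  choose T hT using hpsi
  -- additivity / homogeneity of T x
  have hTadd : ∀ (x h₁ h₂ : X), T x (h₁ + h₂) = T x h₁ + T x h₂ := by
    intro x h₁ h₂
    refine (NormedSpace.eq_iff_forall_dual_eq ℝ).mpr fun g => ?_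
    simp [hT, map_add]
  have hTsmul : ∀ (x : X) (c : ℝ) (h : X), T x (c • h) = c • T x h := by
    intro x c h
    refine (NormedSpace.eq_iff_forall_dual_eq ℝ).mpr fun g => ?_
    simp [hT, map_smul]
  -- T x is bounded
  have hTbound : ∀ x : X, ∃ C : ℝ, ∀ h : X, ‖T x h‖ ≤ C * ‖h‖ := by
    intro x
    obtain ⟨δ, hδpos, hδ⟩ := Metric.continuousAt_iff.mp (hF.continuousAt (x := x)) 1 one_pos
    set r : ℝ := δ / 2 with hr
    have hrpos : 0 < r := by positivity
    refine ⟨(1 + L * r * r) / r, fun h => ?_⟩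
    rcases eq_or_ne h 0 with rfl | hh0
    · have : T x 0 = 0 := by
        have := hTsmul x 0 0
        simpa using this
      simp [this]
    · have hhn : (0:ℝ) < ‖h‖ := norm_pos_iff.mpr hh0
      set h' : X := (r / ‖h‖) • h with hh'
      have hnorm' : ‖h'‖ = r := by
        rw [hh', norm_smul, Real.norm_eq_abs, abs_of_pos (by positivity),
          div_mul_cancel₀ _ hhn.ne']
      have hFsmall : ‖F (x + h') - F x‖ ≤ 1 := by
        have : dist (x + h') x < δ := by
          rw [dist_eq_norm, add_sub_cancel_left, hnorm', hr]
          linarith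
        have := hδ this
        rw [dist_eq_norm] at this
        linarith
      have hb' : ∀ y' : Y →L[ℝ] ℝ,
          |fderiv ℝ (fun z => y' (F z)) x h'| ≤ (1 + L * r * r) * ‖y'‖ := by
        intro y'
        calc |fderiv ℝ (fun z => y' (F z)) x h'|
            ≤ (‖F (x + h') - F x‖ + L * ‖h'‖ * ‖h'‖) * ‖y'‖ := bound1 x h' y'
          _ ≤ (1 + L * r * r) * ‖y'‖ := by
              apply mul_le_mul_of_nonneg_right _ (norm_nonneg _)
              rw [hnorm']
              linarith
      have hrel : h = (‖h‖ / r) • h' := by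
        rw [hh', smul_smul, div_mul_div_comm, mul_comm ‖h‖ r,
          div_self (by positivity), one_smul]
      refine NormedSpace.norm_le_dual_bound ℝ _ (by positivity) fun f => ?_
      rw [hT]
      have : fderiv ℝ (fun z => f (F z)) x h
          = (‖h‖ / r) * fderiv ℝ (fun z => f (F z)) x h' := by
        conv_lhs => rw [hrel]
        rw [map_smul, smul_eq_mul]
      rw [this, Real.norm_eq_abs, abs_mul, abs_of_nonneg (by positivity)]
      calc ‖h‖ / r * |fderiv ℝ (fun z => f (F z)) x h'|
          ≤ ‖h‖ / r * ((1 + L * r * r) * ‖f‖) :=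
            mul_le_mul_of_nonneg_left (hb' f) (by positivity)
        _ = (1 + L * r * r) / r * ‖h‖ * ‖f‖ := by ring
  -- the candidate derivative as a continuous linear map
  let A : X → X →L[ℝ] Y := fun x =>
    LinearMap.mkContinuousOfExistsBound
      { toFun := T x, map_add' := hTadd x,
        map_smul' := fun c h => by simp [hTsmul x c h] } (hTbound x)
  have hA : ∀ (x h : X) (y' : Y →L[ℝ] ℝ),
      y' (A x h) = fderiv ℝ (fun z => y' (F z)) x h := by
    intro x h y'
    simp only [A, LinearMap.mkContinuousOfExistsBound_apply, LinearMap.coe_mk,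
      AddHom.coe_mk]
    exact hT x h y'
  -- F has derivative A x at each x
  have hder : ∀ x : X, HasFDerivAt F (A x) x := by
    intro x
    rw [hasFDerivAt_iff_isLittleO_nhds_zero, Asymptotics.isLittleO_iff]
    intro c hc
    have hbd : ∀ h : X, ‖F (x + h) - F x - A x h‖ ≤ L * ‖h‖ * ‖h‖ := by
      intro h
      refine NormedSpace.norm_le_dual_bound ℝ _ (by positivity) fun f => ?_
      rw [map_sub, map_sub, hA, Real.norm_eq_abs]
      exact key' f x h
    filter_upwards [Metric.ball_mem_nhds (0 : X) (show 0 < c / L by positivity)] with h hh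
    have hsmall : ‖h‖ < c / L := by
      simpa [dist_zero_right] using hh
    calc ‖F (x + h) - F x - A x h‖ ≤ L * ‖h‖ * ‖h‖ := hbd h
      _ ≤ c * ‖h‖ := by
        have h2 : ‖h‖ * L < c := (lt_div_iff₀ hL).mp hsmall
        have h3 : L * ‖h‖ ≤ c := by rw [mul_comm]; exact h2.le
        exact mul_le_mul_of_nonneg_right h3 (norm_nonneg h)
  have hdF : Differentiable ℝ F := fun x => (hder x).differentiableAt
  refine ⟨hdF, fun a b => ?_⟩
  rw [(hder a).fderiv, (hder b).fderiv]
  refine ContinuousLinearMap.opNorm_le_bound _ (by positivity) fun h => ?_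
  rw [ContinuousLinearMap.sub_apply]
  have : ‖A a h - A b h‖ ≤ L * ‖a - b‖ * ‖h‖ := by
    refine NormedSpace.norm_le_dual_bound ℝ _ (by positivity) fun f => ?_
    rw [map_sub, hA, hA, Real.norm_eq_abs]
    refine master (fun w => fderiv ℝ (fun z => w (F z)) a h
      - fderiv ℝ (fun z => w (F z)) b h) _ (by positivity) ?_ ?_ f
    · intro c w hc
      beta_reduce
      rw [hsmul, hsmul]
      simp only [ContinuousLinearMap.smul_apply, smul_eq_mul]
      ring
    · intro w hw
      have h1 := (hslice w hw).2 a b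
      calc |fderiv ℝ (fun z => w (F z)) a h - fderiv ℝ (fun z => w (F z)) b h|
          = ‖(fderiv ℝ (fun z => w (F z)) a - fderiv ℝ (fun z => w (F z)) b) h‖ := by
            rw [ContinuousLinearMap.sub_apply, Real.norm_eq_abs]
        _ ≤ ‖fderiv ℝ (fun z => w (F z)) a - fderiv ℝ (fun z => w (F z)) b‖ * ‖h‖ :=
            ContinuousLinearMap.le_opNorm _ _
        _ ≤ L * ‖a - b‖ * ‖h‖ := mul_le_mul_of_nonneg_right h1 (norm_nonneg h)
  calc ‖A a h - A b h‖ ≤ L * ‖a - b‖ * ‖h‖ := this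
    _ = L * ‖a - b‖ * ‖h‖ := rfl
end

section
/- Let X be a real Hilbert space, L > 0, and let φ : X → ℝ be a continuous function such that both x ↦ (L/2)‖x‖² − φ(x) and x ↦ (L/2)‖x‖² + φ(x) are convex on X. Then φ is Fréchet differentiable on X and its gradient ∇φ : X → X is L-Lipschitz continuous. -/
open RealInnerProductSpace

theorem my_exists_subgradient {X : Type*} [NormedAddCommGroup X] [InnerProductSpace ℝ X]
    [CompleteSpace X] (f : X → ℝ) (hf : Continuous f) (hc : ConvexOn ℝ Set.univ f) (x : X) :
    ∃ p : X, ∀ y, f x + ⟪p, y - x⟫ ≤ f y := by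
  set s : Set (X × ℝ) := {p | f p.1 < p.2} with hs
  have hs_open : IsOpen s := isOpen_lt (hf.comp continuous_fst) continuous_snd
  have hs_conv : Convex ℝ s := by
    rintro ⟨y₁, t₁⟩ h₁ ⟨y₂, t₂⟩ h₂ a b ha hb hab
    simp only [hs, Set.mem_setOf_eq] at h₁ h₂ ⊢
    rcases ha.eq_or_lt with rfl | ha'
    · simp only [zero_add] at hab; subst hab
      simpa using h₂
    · calc f (a • (y₁, t₁) + b • (y₂, t₂)).1 = f (a • y₁ + b • y₂) := rfl
        _ ≤ a * f y₁ + b * f y₂ := hc.2 (Set.mem_univ _) (Set.mem_univ _) ha hb hab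
        _ < a * t₁ + b * t₂ :=
          add_lt_add_of_lt_of_le (by exact (mul_lt_mul_iff_right₀ ha').2 h₁)
            (mul_le_mul_of_nonneg_left h₂.le hb)
  have hdisj : Disjoint s {((x, f x) : X × ℝ)} := by
    simp [Set.disjoint_singleton_right, hs]
  obtain ⟨ℓ, u, hlt, hle⟩ :=
    geometric_hahn_banach_open hs_conv hs_open (convex_singleton _) hdisj
  have hux : u ≤ ℓ (x, f x) := hle _ rfl
  have hdecomp : ∀ (y : X) (t : ℝ), ℓ (y, t) = ℓ (y, 0) + t * ℓ (0, 1) := by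
    intro y t
    have h : ((y, t) : X × ℝ) = (y, 0) + t • ((0 : X), (1 : ℝ)) := by
      simp [Prod.ext_iff]
    rw [h, map_add, map_smul, smul_eq_mul]
  set c : ℝ := ℓ (0, 1) with hcdef
  have hc0 : c < 0 := by
    have h1 : ℓ (x, f x + 1) < u := hlt _ (by simp [hs])
    rw [hdecomp] at h1 hux
    nlinarith
  have key : ∀ y : X, ℓ (y, 0) + f y * c ≤ ℓ (x, 0) + f x * c := by
    intro y
    have hε : ∀ ε : ℝ, 0 < ε → ℓ (y, 0) + (f y + ε) * c < ℓ (x, 0) + f x * c := by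
      intro ε hε
      have h1 : ℓ (y, f y + ε) < u := hlt _ (by simp [hs, hε])
      rw [hdecomp] at h1 hux
      linarith
    by_contra h
    push_neg at h
    set D : ℝ := ℓ (y, 0) + f y * c - (ℓ (x, 0) + f x * c) with hD
    have hDpos : 0 < D := by simp only [hD]; linarith
    set ε : ℝ := D / (-2 * c) with hεdef
    have hεpos : 0 < ε := div_pos hDpos (by linarith)
    have hεc : ε * c = -D / 2 := by
      rw [hεdef, div_mul_eq_mul_div, div_eq_div_iff (by linarith) (by norm_num)]
      ring
    have h2 := hε ε hεpos
    nlinarith [h2, hεc]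
  set m : X →L[ℝ] ℝ := (-(c⁻¹)) • (ℓ.comp (ContinuousLinearMap.inl ℝ X ℝ)) with hm
  refine ⟨(InnerProductSpace.toDual ℝ X).symm m, fun y => ?_⟩
  have hinner : ⟪(InnerProductSpace.toDual ℝ X).symm m, y - x⟫ =
      -(c⁻¹) * (ℓ (y, 0) - ℓ (x, 0)) := by
    rw [InnerProductSpace.toDual_symm_apply]
    have : ℓ ((y - x, 0) : X × ℝ) = ℓ (y, 0) - ℓ (x, 0) := by
      have h : ((y - x, 0) : X × ℝ) = (y, 0) - (x, 0) := by simp [Prod.ext_iff]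
      rw [h, map_sub]
    simp [hm, ContinuousLinearMap.smul_apply, this]
  rw [hinner]
  have h1 : ℓ (y, 0) - ℓ (x, 0) ≤ (f x - f y) * c := by linarith [key y]
  have h2 : (0:ℝ) ≤ -(c⁻¹) := by
    have := inv_neg''.mpr hc0
    linarith
  have h3 : -(c⁻¹) * (ℓ (y, 0) - ℓ (x, 0)) ≤ -(c⁻¹) * ((f x - f y) * c) :=
    mul_le_mul_of_nonneg_left h1 h2
  have h4 : c⁻¹ * c = 1 := inv_mul_cancel₀ hc0.ne
  have h5 : -(c⁻¹) * ((f x - f y) * c) = f y - f x := by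
    linear_combination (f y - f x) * h4
  linarith [h3, h5]

theorem my_two_sided_bound {X : Type*} [NormedAddCommGroup X] [InnerProductSpace ℝ X]
    [CompleteSpace X] (L : ℝ) (hL : 0 < L) (φ : X → ℝ) (hφ : Continuous φ)
    (hconv₁ : ConvexOn ℝ Set.univ (fun x => L / 2 * ‖x‖ ^ 2 - φ x))
    (hconv₂ : ConvexOn ℝ Set.univ (fun x => L / 2 * ‖x‖ ^ 2 + φ x)) (x : X) :
    ∃ a : X, ∀ s : X, |φ (x + s) - φ x - ⟪a, s⟫| ≤ L / 2 * ‖s‖ ^ 2 := by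
  have hQ : Continuous fun z : X => L / 2 * ‖z‖ ^ 2 :=
    continuous_const.mul (continuous_norm.pow 2)
  obtain ⟨p, hp⟩ := my_exists_subgradient _ (hQ.sub hφ) hconv₁ x
  obtain ⟨q, hq⟩ := my_exists_subgradient _ (hQ.add hφ) hconv₂ x
  have hexp : ∀ s : X, ‖x + s‖ ^ 2 = ‖x‖ ^ 2 + 2 * ⟪x, s⟫ + ‖s‖ ^ 2 := fun s => by
    rw [← norm_add_sq_real]
  -- upper bound with a₁ := L • x - p
  have hupper : ∀ s : X, φ (x + s) ≤ φ x + ⟪L • x - p, s⟫ + L / 2 * ‖s‖ ^ 2 := by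
    intro s
    have h := hp (x + s)
    simp only [add_sub_cancel_left, Pi.sub_apply] at h
    rw [inner_sub_left, real_inner_smul_left]
    have := hexp s
    nlinarith [h]
  have hlower : ∀ s : X, φ x + ⟪q - L • x, s⟫ - L / 2 * ‖s‖ ^ 2 ≤ φ (x + s) := by
    intro s
    have h := hq (x + s)
    simp only [add_sub_cancel_left, Pi.add_apply] at h
    rw [inner_sub_left, real_inner_smul_left]
    have := hexp s
    nlinarith [h]
  -- the two vectors agree
  have heq : L • x - p = q - L • x := by
    set a := L • x - p
    set b := q - L • x
    have hab : ∀ s : X, ⟪b, s⟫ - ⟪a, s⟫ ≤ L * ‖s‖ ^ 2 := by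
      intro s
      have h1 := hupper s
      have h2 := hlower s
      linarith
    have key : ‖b - a‖ ^ 2 ≤ 0 := by
      by_contra hcon
      push_neg at hcon
      have h := hab ((1 / (2 * L)) • (b - a))
      rw [inner_smul_right, inner_smul_right, ← mul_sub, ← inner_sub_left,
        real_inner_self_eq_norm_sq, norm_smul] at h
      rw [Real.norm_eq_abs, abs_of_pos (by positivity : (0:ℝ) < 1 / (2 * L)), mul_pow] at h
      have e1 : L * ((1 / (2 * L)) ^ 2 * ‖b - a‖ ^ 2) = (1 / (2 * L)) * (‖b - a‖ ^ 2 / 2) := by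
        field_simp
      rw [e1] at h
      have h2 : ‖b - a‖ ^ 2 ≤ ‖b - a‖ ^ 2 / 2 :=
        (mul_le_mul_iff_right₀ (by positivity : (0:ℝ) < 1 / (2 * L))).mp h
      linarith
    have : b - a = 0 := by
      have := sq_nonneg ‖b - a‖
      have h0 : ‖b - a‖ ^ 2 = 0 := le_antisymm key this
      have : ‖b - a‖ = 0 := by nlinarith [norm_nonneg (b - a)]
      exact norm_eq_zero.mp this
    exact (sub_eq_zero.mp this).symm
  refine ⟨L • x - p, fun s => ?_⟩
  rw [abs_le]
  constructor
  · have := hlower s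
    rw [heq]
    linarith
  · have := hupper s
    linarith

/-- If `φ : X → ℝ` (with `X` a real Hilbert space) is continuous and both `(L/2)‖·‖² - φ` and
`(L/2)‖·‖² + φ` are convex, then `φ` is Fréchet differentiable and its gradient is
`L`-Lipschitz continuous. -/
theorem differentiable_lipschitz_gradient_of_two_sided_convexity
    {X : Type*} [NormedAddCommGroup X] [InnerProductSpace ℝ X] [CompleteSpace X]
    (L : ℝ) (hL : 0 < L) (φ : X → ℝ) (hφ : Continuous φ)
    (hconv₁ : ConvexOn ℝ Set.univ (fun x => L / 2 * ‖x‖ ^ 2 - φ x))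
    (hconv₂ : ConvexOn ℝ Set.univ (fun x => L / 2 * ‖x‖ ^ 2 + φ x)) :
    Differentiable ℝ φ ∧ ∀ x y : X, ‖gradient φ x - gradient φ y‖ ≤ L * ‖x - y‖ := by
  choose A hA using fun x => my_two_sided_bound L hL φ hφ hconv₁ hconv₂ x
  have hgrad : ∀ x, HasGradientAt φ (A x) x := by
    intro x
    rw [hasGradientAt_iff_isLittleO_nhds_zero, Asymptotics.isLittleO_iff]
    intro c hc
    rw [Metric.eventually_nhds_iff]
    refine ⟨2 * c / L, by positivity, fun s hs => ?_⟩
    rw [dist_zero_right] at hs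
    have hs' : ‖s‖ * L < 2 * c := (lt_div_iff₀ hL).mp hs
    have h2 : L / 2 * ‖s‖ ^ 2 ≤ c * ‖s‖ := by nlinarith [norm_nonneg s, hL]
    rw [Real.norm_eq_abs]
    exact le_trans (hA x s) h2
  have hdiff : Differentiable ℝ φ := fun x => (hgrad x).differentiableAt
  have hAg : ∀ x, gradient φ x = A x := fun x => (hgrad x).gradient
  refine ⟨hdiff, fun x y => ?_⟩
  rw [hAg x, hAg y]
  have hup : ∀ z s : X, φ (z + s) ≤ φ z + ⟪A z, s⟫ + L / 2 * ‖s‖ ^ 2 := fun z s => by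
    linarith [(abs_le.mp (hA z s)).2]
  have hlo : ∀ z s : X, φ z + ⟪A z, s⟫ - L / 2 * ‖s‖ ^ 2 ≤ φ (z + s) := fun z s => by
    linarith [(abs_le.mp (hA z s)).1]
  obtain ⟨G, hG⟩ : ∃ G : X → X, G = fun z => L • z + A z := ⟨_, rfl⟩
  obtain ⟨g, hgdef⟩ : ∃ g : X → ℝ, g = fun z => L / 2 * ‖z‖ ^ 2 + φ z := ⟨_, rfl⟩
  have hexp : ∀ z s : X, ‖z + s‖ ^ 2 = ‖z‖ ^ 2 + 2 * ⟪z, s⟫ + ‖s‖ ^ 2 := fun z s => by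
    rw [← norm_add_sq_real]
  have hGi : ∀ z s : X, ⟪G z, s⟫ = L * ⟪z, s⟫ + ⟪A z, s⟫ := fun z s => by
    rw [hG]; simp only [inner_add_left, real_inner_smul_left]
  have gi : ∀ z w : X, g z + ⟪G z, w - z⟫ ≤ g w := by
    intro z w
    have h := hlo z (w - z)
    have hzw : z + (w - z) = w := by abel
    rw [hzw] at h
    rw [hGi]
    have hw : ‖w‖ ^ 2 = ‖z‖ ^ 2 + 2 * ⟪z, w - z⟫ + ‖w - z‖ ^ 2 := by
      rw [← hexp z (w - z), hzw]
    rw [hgdef]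
    simp only
    rw [hw]; nlinarith [h]
  have desc : ∀ z s : X, g (z + s) ≤ g z + ⟪G z, s⟫ + L * ‖s‖ ^ 2 := by
    intro z s
    have h := hup z s
    have hw := hexp z s
    rw [hGi]
    rw [hgdef]
    simp only
    rw [hw]; nlinarith [h]
  have half : ∀ z w : X, g z + ⟪G z, w - z⟫ + 1 / (4 * L) * ‖G w - G z‖ ^ 2 ≤ g w := by
    intro z w
    obtain ⟨s, hsdef⟩ : ∃ s : X, s = (-(1 / (2 * L))) • (G w - G z) := ⟨_, rfl⟩
    have h1 := gi z (w + s)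
    have h2 := desc w s
    have e1 : ⟪G z, w + s - z⟫ = ⟪G z, w - z⟫ + ⟪G z, s⟫ := by
      rw [← inner_add_right]; congr 1; abel
    have e2 : ⟪G w, s⟫ - ⟪G z, s⟫ = ⟪G w - G z, s⟫ := (inner_sub_left _ _ _).symm
    have e3 : ⟪G w - G z, s⟫ = -(1 / (2 * L)) * ‖G w - G z‖ ^ 2 := by
      rw [hsdef, inner_smul_right, real_inner_self_eq_norm_sq]
    have e4 : L * ‖s‖ ^ 2 = 1 / (4 * L) * ‖G w - G z‖ ^ 2 := by
      rw [hsdef, norm_smul, Real.norm_eq_abs, abs_neg,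
        abs_of_pos (by positivity : (0:ℝ) < 1 / (2 * L)), mul_pow]
      field_simp
      ring
    have h3 := le_trans h1 h2
    rw [e1] at h3
    have e5 : (1:ℝ) / (2 * L) = 2 * (1 / (4 * L)) := by
      field_simp
      ring
    have e6 : inner ℝ (G w - G z) s + L * ‖s‖ ^ 2 = -(1 / (4 * L) * ‖G w - G z‖ ^ 2) := by
      rw [e3, e4, e5]; ring
    linarith [h3, e2, e6]
  have coco : ∀ z w : X, ‖G z - G w‖ ^ 2 ≤ 2 * L * ⟪G z - G w, z - w⟫ := by
    intro z w
    have h1 := half z w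
    have h2 := half w z
    have e1 : ⟪G z, w - z⟫ = -⟪G z, z - w⟫ := by
      rw [← inner_neg_right]; congr 1; abel
    have e2 : ⟪G z - G w, z - w⟫ = ⟪G z, z - w⟫ - ⟪G w, z - w⟫ := inner_sub_left _ _ _
    have e3 : ⟪G w, z - w⟫ = ⟪G w, z - w⟫ := rfl
    have e4 : ‖G w - G z‖ = ‖G z - G w‖ := norm_sub_rev _ _
    have hsum : 1 / (2 * L) * ‖G z - G w‖ ^ 2 ≤ ⟪G z - G w, z - w⟫ := by
      rw [e2]
      rw [e4] at h1
      have e5 : (1:ℝ) / (2 * L) = 2 * (1 / (4 * L)) := by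
        field_simp
        ring
      rw [e5]
      linarith [h1, h2, e1]
    have hone : 2 * L * (1 / (2 * L)) = 1 := by field_simp
    calc ‖G z - G w‖ ^ 2 = 2 * L * (1 / (2 * L) * ‖G z - G w‖ ^ 2) := by
          rw [← mul_assoc, hone, one_mul]
      _ ≤ 2 * L * ⟪G z - G w, z - w⟫ :=
          mul_le_mul_of_nonneg_left hsum (by positivity)
  have coco' := coco x y
  have hGsub : G x - G y = L • (x - y) + (A x - A y) := by
    rw [hG]; simp only; rw [smul_sub]; abel
  have hin : ⟪G x - G y, x - y⟫ = L * ‖x - y‖ ^ 2 + ⟪A x - A y, x - y⟫ := by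
    rw [hGsub, inner_add_left, real_inner_smul_left, real_inner_self_eq_norm_sq]
  have hnorm : ‖G x - G y‖ ^ 2 =
      L ^ 2 * ‖x - y‖ ^ 2 + 2 * (L * ⟪A x - A y, x - y⟫) + ‖A x - A y‖ ^ 2 := by
    rw [hGsub, norm_add_sq_real, norm_smul, Real.norm_eq_abs, abs_of_pos hL, mul_pow,
      real_inner_smul_left, real_inner_comm]
  rw [hnorm, hin] at coco'
  nlinarith [coco', norm_nonneg (A x - A y), norm_nonneg (x - y), hL.le,
    mul_nonneg hL.le (norm_nonneg (x - y)), sq_nonneg (‖A x - A y‖ - L * ‖x - y‖),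
    sq_nonneg (‖A x - A y‖ + L * ‖x - y‖)]
end

section
/- Let X be a real Hilbert space and Y a real Banach space that is reflexive (the canonical embedding of Y into its double dual Y** is surjective). Let F : X → Y be continuous and L > 0, and suppose that for any finitely many points x₁,…,xₙ ∈ X and nonnegative weights λ₁,…,λₙ with ∑ᵢ λᵢ = 1, one has ‖F(∑ᵢ λᵢ xᵢ) − ∑ᵢ λᵢ F(xᵢ)‖ ≤ (L/2) · ∑_{1 ≤ i < j ≤ n} λᵢ λⱼ ‖xᵢ − xⱼ‖². Then F is Fréchet differentiable on X and for all x, h ∈ X, ‖F(x + h) − F(x) − F′(x)h‖ ≤ (L/2)‖h‖². -/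
noncomputable section JensenAux

open Filter Topology

variable {X : Type*} [NormedAddCommGroup X] [NormedSpace ℝ X]
variable {Y : Type*} [NormedAddCommGroup Y] [NormedSpace ℝ Y]

/-- Difference quotient. -/
def jD (F : X → Y) (x h : X) (t : ℝ) : Y := t⁻¹ • (F (x + t • h) - F x)

/-- Two-point Jensen inequality. -/
def JKey (F : X → Y) (L : ℝ) : Prop := ∀ a b : X, ∀ l : ℝ, 0 ≤ l → l ≤ 1 →
  ‖F (l • a + (1 - l) • b) - (l • F a + (1 - l) • F b)‖ ≤
    L / 2 * (l * (1 - l) * ‖a - b‖ ^ 2)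

lemma jD_sub {F : X → Y} {L : ℝ} (hkey : JKey F L) {x h : X} {s t : ℝ}
    (hs : 0 < s) (hst : s ≤ t) :
    ‖jD F x h s - jD F x h t‖ ≤ L / 2 * ((t - s) * ‖h‖ ^ 2) := by
  rcases eq_or_lt_of_le hst with rfl | hlt
  · simp
  have ht : 0 < t := hs.trans hlt
  set l : ℝ := s / t with hl
  have hl0 : 0 < l := div_pos hs ht
  have hl1 : l < 1 := (div_lt_one ht).mpr hlt
  have hk := hkey (x + t • h) x l hl0.le hl1.le
  have e1 : l • (x + t • h) + (1 - l) • x = x + s • h := by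
    have hlt' : l * t = s := div_mul_cancel₀ s ht.ne'
    rw [show x + s • h = x + (l * t) • h by rw [hlt']]
    module
  have e2 : ‖(x + t • h) - x‖ ^ 2 = t ^ 2 * ‖h‖ ^ 2 := by
    rw [add_sub_cancel_left, norm_smul, Real.norm_eq_abs, abs_of_pos ht, mul_pow]
  rw [e1, e2] at hk
  have e3 : jD F x h s - jD F x h t
      = s⁻¹ • (F (x + s • h) - (l • F (x + t • h) + (1 - l) • F x)) := by
    simp only [jD, hl]
    match_scalars <;> field_simp <;> ring
  rw [e3, norm_smul, Real.norm_eq_abs, abs_of_pos (inv_pos.mpr hs)]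
  calc s⁻¹ * ‖F (x + s • h) - (l • F (x + t • h) + (1 - l) • F x)‖
      ≤ s⁻¹ * (L / 2 * (l * (1 - l) * (t ^ 2 * ‖h‖ ^ 2))) :=
        mul_le_mul_of_nonneg_left hk (inv_pos.mpr hs).le
    _ = L / 2 * ((t - s) * ‖h‖ ^ 2) := by
        rw [hl]; field_simp

lemma jD_add {F : X → Y} {L : ℝ} (hkey : JKey F L) {x h₁ h₂ : X} {t : ℝ} (ht : 0 < t) :
    ‖jD F x (h₁ + h₂) t - jD F x h₁ (2 * t) - jD F x h₂ (2 * t)‖ ≤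
      L / 2 * (t * ‖h₁ - h₂‖ ^ 2) := by
  have hk := hkey (x + (2 * t) • h₁) (x + (2 * t) • h₂) (1/2) (by norm_num) (by norm_num)
  have e1 : (1/2 : ℝ) • (x + (2 * t) • h₁) + (1 - 1/2 : ℝ) • (x + (2 * t) • h₂)
      = x + t • (h₁ + h₂) := by
    rw [show (1 : ℝ) - 1/2 = 1/2 by norm_num]
    match_scalars <;> ring
  have e2 : ‖(x + (2 * t) • h₁) - (x + (2 * t) • h₂)‖ ^ 2 = 4 * t ^ 2 * ‖h₁ - h₂‖ ^ 2 := by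
    rw [show (x + (2 * t) • h₁) - (x + (2 * t) • h₂) = (2 * t) • (h₁ - h₂) by module,
      norm_smul, Real.norm_eq_abs, abs_of_pos (by linarith), mul_pow]
    ring
  rw [e1, e2] at hk
  have e3 : jD F x (h₁ + h₂) t - jD F x h₁ (2 * t) - jD F x h₂ (2 * t)
      = t⁻¹ • (F (x + t • (h₁ + h₂)) -
          ((1/2 : ℝ) • F (x + (2 * t) • h₁) + (1 - 1/2 : ℝ) • F (x + (2 * t) • h₂))) := by
    simp only [jD]
    match_scalars <;> field_simp <;> try ring
  rw [e3, norm_smul, Real.norm_eq_abs, abs_of_pos (inv_pos.mpr ht)]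
  calc t⁻¹ * ‖F (x + t • (h₁ + h₂)) -
        ((1/2 : ℝ) • F (x + (2 * t) • h₁) + (1 - 1/2 : ℝ) • F (x + (2 * t) • h₂))‖
      ≤ t⁻¹ * (L / 2 * (1/2 * (1 - 1/2) * (4 * t ^ 2 * ‖h₁ - h₂‖ ^ 2))) :=
        mul_le_mul_of_nonneg_left hk (inv_pos.mpr ht).le
    _ = L / 2 * (t * ‖h₁ - h₂‖ ^ 2) := by field_simp; ring

lemma jD_smul (F : X → Y) (x h : X) {c t : ℝ} (hc : c ≠ 0) (ht : t ≠ 0) :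
    jD F x (c • h) t = c • jD F x h (c * t) := by
  simp only [jD]
  rw [show x + t • (c • h) = x + (c * t) • h by module]
  match_scalars <;> field_simp

lemma jexists_limit [CompleteSpace Y] {F : X → Y} {L : ℝ} (hkey : JKey F L) (hL : 0 ≤ L)
    (x h : X) : ∃ A : Y, ∀ t > (0:ℝ), ‖jD F x h t - A‖ ≤ L / 2 * (t * ‖h‖ ^ 2) := by
  set u : ℕ → Y := fun n => jD F x h (1 / (n + 1)) with hu
  have hpos : ∀ n : ℕ, (0:ℝ) < 1 / (n + 1) := fun n => by positivity
  have hmono : ∀ {n m : ℕ}, n ≤ m → (1:ℝ) / (m + 1) ≤ 1 / (n + 1) := by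
    intro n m hnm
    gcongr <;> exact_mod_cast hnm
  have hcau : CauchySeq u := by
    apply cauchySeq_of_le_tendsto_0 (b := fun N : ℕ => L / 2 * ((1 / (N + 1)) * ‖h‖ ^ 2))
    · intro n m N hn hm
      rcases le_total n m with hnm | hnm
      · rw [dist_comm, dist_eq_norm]
        calc ‖u m - u n‖ ≤ L / 2 * (((1:ℝ)/(n+1) - 1/(m+1)) * ‖h‖ ^ 2) :=
              jD_sub hkey (hpos m) (hmono hnm)
          _ ≤ L / 2 * ((1/(N+1)) * ‖h‖ ^ 2) := by
              have h1 := hmono hn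
              have h2 := (hpos m).le
              have h3 : (0:ℝ) ≤ ‖h‖ ^ 2 := by positivity
              exact mul_le_mul_of_nonneg_left
                (mul_le_mul_of_nonneg_right (by linarith) h3) (by linarith)
      · rw [dist_eq_norm]
        calc ‖u n - u m‖ ≤ L / 2 * (((1:ℝ)/(m+1) - 1/(n+1)) * ‖h‖ ^ 2) :=
              jD_sub hkey (hpos n) (hmono hnm)
          _ ≤ L / 2 * ((1/(N+1)) * ‖h‖ ^ 2) := by
              have h1 := hmono hm
              have h2 := (hpos n).le
              have h3 : (0:ℝ) ≤ ‖h‖ ^ 2 := by positivity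
              exact mul_le_mul_of_nonneg_left
                (mul_le_mul_of_nonneg_right (by linarith) h3) (by linarith)
    · have : Tendsto (fun N : ℕ => (1:ℝ) / (N + 1)) atTop (𝓝 0) :=
        tendsto_one_div_add_atTop_nhds_zero_nat
      have := (this.mul_const (‖h‖ ^ 2)).const_mul (L / 2)
      simpa using this
  obtain ⟨A, hA⟩ := cauchySeq_tendsto_of_complete hcau
  refine ⟨A, fun t ht => ?_⟩
  have hev : ∀ᶠ n in atTop, ‖jD F x h t - u n‖ ≤ L / 2 * (t * ‖h‖ ^ 2) := by
    have hsmall : ∀ᶠ n : ℕ in atTop, (1:ℝ) / (n + 1) ≤ t := by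
      have : Tendsto (fun n : ℕ => (1:ℝ) / (n + 1)) atTop (𝓝 0) :=
        tendsto_one_div_add_atTop_nhds_zero_nat
      exact this.eventually_le_const ht
    filter_upwards [hsmall] with n hn
    rw [norm_sub_rev]
    calc ‖u n - jD F x h t‖ ≤ L / 2 * ((t - 1/(n+1)) * ‖h‖ ^ 2) :=
          jD_sub hkey (hpos n) hn
      _ ≤ L / 2 * (t * ‖h‖ ^ 2) := by
          have := (hpos n).le
          have h3 : (0:ℝ) ≤ ‖h‖ ^ 2 := by positivity
          exact mul_le_mul_of_nonneg_left
            (mul_le_mul_of_nonneg_right (by linarith) h3) (by linarith)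
  have hlim : Tendsto (fun n => ‖jD F x h t - u n‖) atTop (𝓝 ‖jD F x h t - A‖) :=
    (tendsto_const_nhds.sub hA).norm
  exact le_of_tendsto hlim hev

lemma jeq_zero_of_norm_le {v : Y} {C : ℝ} (hC : 0 ≤ C)
    (h : ∀ t > (0:ℝ), ‖v‖ ≤ t * C) : v = 0 := by
  rw [← norm_le_zero_iff]
  refine le_of_forall_pos_le_add fun ε hε => ?_
  have hb := h (ε / (C + 1)) (by positivity)
  have : ε / (C + 1) * C ≤ ε := by
    rw [div_mul_eq_mul_div, div_le_iff₀ (by linarith)]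
    nlinarith
  linarith

end JensenAux

open Filter Topology

/-- If `F : X → Y` (with `X` a real Hilbert space and `Y` a reflexive real Banach space) is
continuous and satisfies the Jensen-type inequality for all convex combinations, then `F` is
Fréchet differentiable and satisfies `‖F (x + h) - F x - F' x h‖ ≤ L/2 * ‖h‖²`. -/
theorem differentiable_and_quadratic_bound_of_jensen_inequality
    {X : Type*} [NormedAddCommGroup X] [InnerProductSpace ℝ X] [CompleteSpace X]
    {Y : Type*} [NormedAddCommGroup Y] [NormedSpace ℝ Y] [CompleteSpace Y]
    (hrefl : Function.Surjective (NormedSpace.inclusionInDoubleDual ℝ Y))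
    (F : X → Y) (hF : Continuous F) (L : ℝ) (hL : 0 < L)
    (hineq : ∀ (n : ℕ) (x : Fin n → X) (lam : Fin n → ℝ), (∀ i, 0 ≤ lam i) → ∑ i, lam i = 1 →
      ‖F (∑ i, lam i • x i) - ∑ i, lam i • F (x i)‖ ≤
        L / 2 * ∑ i, ∑ j, if i < j then lam i * lam j * ‖x i - x j‖ ^ 2 else 0) :
    Differentiable ℝ F ∧
      ∀ x h : X, ‖F (x + h) - F x - fderiv ℝ F x h‖ ≤ L / 2 * ‖h‖ ^ 2 := by
  clear hrefl
  -- Step 1: the two-point inequality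
  have hkey : JKey F L := by
    intro a b l hl0 hl1
    have h2 := hineq 2 ![a, b] ![l, 1 - l]
      (by intro i; fin_cases i <;> simp [hl0] <;> linarith)
      (by simp [Fin.sum_univ_two])
    simp only [Fin.sum_univ_two, Fin.sum_univ_succ] at h2
    simpa using h2
  -- Step 2: the limit of difference quotients
  choose A hA using fun x h => jexists_limit hkey hL.le x h
  have hb : ∀ x h, ‖F (x + h) - F x - A x h‖ ≤ L / 2 * ‖h‖ ^ 2 := by
    intro x h
    have := hA x h 1 one_pos
    simpa [jD] using this
  have hzero : ∀ x, A x 0 = 0 := by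
    intro x
    have := hA x 0 1 one_pos
    simp only [jD, smul_zero, add_zero, sub_self, norm_pow, norm_zero] at this
    simpa [zero_sub, norm_le_zero_iff] using this
  have hadd : ∀ x h₁ h₂, A x (h₁ + h₂) = A x h₁ + A x h₂ := by
    intro x h₁ h₂
    have key := jeq_zero_of_norm_le
      (v := A x (h₁ + h₂) - A x h₁ - A x h₂)
      (C := L / 2 * (‖h₁ + h₂‖ ^ 2 + 2 * ‖h₁‖ ^ 2 + 2 * ‖h₂‖ ^ 2 + ‖h₁ - h₂‖ ^ 2))
      (by positivity) ?_
    · rw [sub_sub, sub_eq_zero] at key; exact key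
    · intro t ht
      have ht2 : (0:ℝ) < 2 * t := by linarith
      have e1 := hA x (h₁ + h₂) t ht
      have e2 := hA x h₁ (2 * t) ht2
      have e3 := hA x h₂ (2 * t) ht2
      have e4 := jD_add hkey (x := x) (h₁ := h₁) (h₂ := h₂) ht
      have decomp : A x (h₁ + h₂) - A x h₁ - A x h₂ =
          -(jD F x (h₁ + h₂) t - A x (h₁ + h₂)) + (jD F x h₁ (2*t) - A x h₁)
            + (jD F x h₂ (2*t) - A x h₂)
            + (jD F x (h₁ + h₂) t - jD F x h₁ (2*t) - jD F x h₂ (2*t)) := by abel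
      rw [decomp]
      refine le_trans (norm_add_le _ _) ?_
      refine le_trans (add_le_add_left (norm_add_le _ _) _) ?_
      refine le_trans (add_le_add_left (add_le_add_left (norm_add_le _ _) _) _) ?_
      rw [norm_neg]
      refine le_trans (add_le_add (add_le_add (add_le_add e1 e2) e3) e4) (le_of_eq ?_)
      ring
  have hsmul_pos : ∀ (x : X) (c : ℝ) (h : X), 0 < c → A x (c • h) = c • A x h := by
    intro x c h hc
    have key := jeq_zero_of_norm_le (v := A x (c • h) - c • A x h)
      (C := L * (c ^ 2 * ‖h‖ ^ 2)) (by positivity) ?_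
    · rw [sub_eq_zero] at key; exact key
    · intro t ht
      have hct : (0:ℝ) < c * t := mul_pos hc ht
      have e := jD_smul F x h hc.ne' ht.ne'
      have e1 := hA x (c • h) t ht
      have e2 := hA x h (c * t) hct
      have hch : ‖c • h‖ = c * ‖h‖ := by
        rw [norm_smul, Real.norm_eq_abs, abs_of_pos hc]
      calc ‖A x (c • h) - c • A x h‖
          = ‖-(jD F x (c • h) t - A x (c • h)) + c • (jD F x h (c * t) - A x h)‖ := by
            rw [smul_sub, ← e]; congr 1; abel
        _ ≤ ‖jD F x (c • h) t - A x (c • h)‖ + c * ‖jD F x h (c * t) - A x h‖ := by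
            refine le_trans (norm_add_le _ _) ?_
            rw [norm_neg, norm_smul, Real.norm_eq_abs, abs_of_pos hc]
        _ ≤ L / 2 * (t * ‖c • h‖ ^ 2) + c * (L / 2 * ((c * t) * ‖h‖ ^ 2)) :=
            add_le_add e1 (mul_le_mul_of_nonneg_left e2 hc.le)
        _ = t * (L * (c ^ 2 * ‖h‖ ^ 2)) := by rw [hch]; ring
  have hsmul : ∀ (x : X) (c : ℝ) (h : X), A x (c • h) = c • A x h := by
    intro x c h
    rcases lt_trichotomy c 0 with hc | rfl | hc
    · have h1 : c • h + (-c) • h = 0 := by module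
      have h2 := hadd x (c • h) ((-c) • h)
      rw [h1, hzero, hsmul_pos x (-c) h (by linarith)] at h2
      have h3 := eq_neg_of_add_eq_zero_left h2.symm
      rw [h3, ← neg_smul]; ring_nf
    · simp [hzero]
    · exact hsmul_pos x c h hc
  -- Step 3: boundedness of A x
  have hAbound : ∀ x : X, ∃ C : ℝ, ∀ h, ‖A x h‖ ≤ C * ‖h‖ := by
    intro x
    have hc : ContinuousAt (fun h : X => F (x + h) - F x) 0 :=
      ((hF.comp (continuous_const.add continuous_id)).sub continuous_const).continuousAt
    have h0 : (fun h : X => F (x + h) - F x) 0 = 0 := by simp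
    obtain ⟨δ, hδpos, hδ⟩ := Metric.continuousAt_iff.mp hc 1 one_pos
    refine ⟨(1 + L / 2 * (δ/2) ^ 2) / (δ/2), fun h => ?_⟩
    by_cases hh : h = 0
    · simp [hh, hzero]
    · have hn : 0 < ‖h‖ := norm_pos_iff.mpr hh
      set c : ℝ := (δ/2) / ‖h‖ with hcdef
      have hcpos : 0 < c := by positivity
      have hnorm : ‖c • h‖ = δ/2 := by
        rw [norm_smul, Real.norm_eq_abs, abs_of_pos hcpos, hcdef]
        field_simp
      have hFb : ‖F (x + c • h) - F x‖ ≤ 1 := by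
        have hd : dist (c • h) (0:X) < δ := by
          rw [dist_zero_right, hnorm]; linarith
        have := hδ hd
        simpa [dist_eq_norm] using this.le
      have hAb : ‖A x (c • h)‖ ≤ 1 + L / 2 * (δ/2) ^ 2 := by
        calc ‖A x (c • h)‖
            ≤ ‖F (x + c • h) - F x - A x (c • h)‖ + ‖F (x + c • h) - F x‖ := by
              have h1 : A x (c • h) = -(F (x + c • h) - F x - A x (c • h)) + (F (x + c • h) - F x) := by
                abel
              conv_lhs => rw [h1]
              refine le_trans (norm_add_le _ _) ?_
              rw [norm_neg]
          _ ≤ L / 2 * ‖c • h‖ ^ 2 + 1 := add_le_add (hb x (c • h)) hFb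
          _ = 1 + L / 2 * (δ/2) ^ 2 := by rw [hnorm]; ring
      have heq : A x h = c⁻¹ • A x (c • h) := by
        rw [hsmul, smul_smul, inv_mul_cancel₀ hcpos.ne', one_smul]
      rw [heq, norm_smul, Real.norm_eq_abs, abs_of_pos (inv_pos.mpr hcpos)]
      have : c⁻¹ = ‖h‖ / (δ/2) := by rw [hcdef]; field_simp
      rw [this]
      calc ‖h‖ / (δ/2) * ‖A x (c • h)‖ ≤ ‖h‖ / (δ/2) * (1 + L / 2 * (δ/2) ^ 2) := by
            gcongr
        _ = (1 + L / 2 * (δ/2) ^ 2) / (δ/2) * ‖h‖ := by ring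
  -- Step 4: assemble the continuous linear map and conclude
  have hFd : ∀ x : X, ∃ A' : X →L[ℝ] Y, (∀ h, A' h = A x h) ∧ HasFDerivAt F A' x := by
    intro x
    refine ⟨LinearMap.mkContinuousOfExistsBound
      { toFun := A x, map_add' := hadd x, map_smul' := hsmul x } (hAbound x),
      fun h => rfl, ?_⟩
    rw [hasFDerivAt_iff_isLittleO_nhds_zero]
    rw [Asymptotics.isLittleO_iff]
    intro c hc
    have hball : Metric.closedBall (0 : X) (2 * c / L) ∈ 𝓝 (0 : X) :=
      Metric.closedBall_mem_nhds _ (by positivity)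
    filter_upwards [hball] with h hh
    rw [Metric.mem_closedBall, dist_zero_right] at hh
    have hLh : ‖h‖ * L ≤ 2 * c := (le_div_iff₀ hL).mp hh
    calc ‖F (x + h) - F x -
          (LinearMap.mkContinuousOfExistsBound
            { toFun := A x, map_add' := hadd x, map_smul' := hsmul x } (hAbound x)) h‖
        = ‖F (x + h) - F x - A x h‖ := rfl
      _ ≤ L / 2 * ‖h‖ ^ 2 := hb x h
      _ ≤ c * ‖h‖ := by nlinarith [norm_nonneg h]
  choose A' hA'1 hA'2 using hFd
  refine ⟨fun x => (hA'2 x).differentiableAt, fun x h => ?_⟩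
  rw [(hA'2 x).fderiv, hA'1 x h]
  exact hb x h
end
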